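/- Let Λ_n ≠ 0, set X_n = Λ_1 Λ_2 ⋯ Λ_n and G_{n,m} = X_{m-1} ∑_{p=n}^{m-1} X_p^{-1} for m ≥ n+1. If (u_n) is a bounded solution of u_n = 1 + ∑_{m=n+1}^{∞} G_{n,m} R_m u_m (with the relevant series absolutely convergent), then u satisfies the identity u_{n+1} − u_n = −X_n^{-1} ∑_{m=n+1}^{∞} X_{m-1} R_m u_m, and hence the difference equation Λ_n(u_{n+1} − u_n) − (u_n − u_{n-1}) = R_n u_n. -/

import Mathlib

open Finset

/-- From the Volterra equation back to the difference equation: with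
`X_n = Λ_1⋯Λ_n`, `G_{n,m} = X_{m-1} ∑_{p=n}^{m-1} X_p⁻¹`, a bounded solution of
`u_n = 1 + ∑_{m>n} G_{n,m} R_m u_m` satisfies
`u_{n+1} − u_n = −X_n⁻¹ ∑_{m>n} X_{m-1} R_m u_m` and hence
`Λ_n(u_{n+1} − u_n) − (u_n − u_{n-1}) = R_n u_n`. -/
theorem volterra_to_difference (Λ R : ℕ → ℂ) (hΛ : ∀ n, Λ n ≠ 0)
    (X : ℕ → ℂ) (hX : ∀ n, X n = ∏ i ∈ Finset.Icc 1 n, Λ i)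
    (G : ℕ → ℕ → ℂ)
    (hG : ∀ n m : ℕ, n + 1 ≤ m → G n m = X (m - 1) * ∑ p ∈ Finset.Icc n (m - 1), (X p)⁻¹)
    (u : ℕ → ℂ) (hbdd : ∃ C : ℝ, ∀ n, ‖u n‖ ≤ C)
    (hsum : ∀ n : ℕ, Summable (fun m : ℕ => if n < m then G n m * R m * u m else 0))
    (hsum' : ∀ n : ℕ, Summable (fun m : ℕ => if n < m then X (m - 1) * R m * u m else 0))
    (heq : ∀ n : ℕ, u n = 1 + ∑' m : ℕ, if n < m then G n m * R m * u m else 0) :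
    (∀ n : ℕ, u (n + 1) - u n
        = -(X n)⁻¹ * ∑' m : ℕ, if n < m then X (m - 1) * R m * u m else 0) ∧
    (∀ n : ℕ, 1 ≤ n →
        Λ n * (u (n + 1) - u n) - (u n - u (n - 1)) = R n * u n) := by
  have hXne : ∀ n, X n ≠ 0 := by
    intro n; rw [hX]; exact Finset.prod_ne_zero_iff.mpr fun i _ => hΛ i
  set f : ℕ → ℕ → ℂ := fun n m => if n < m then X (m - 1) * R m * u m else 0 with hf
  set g : ℕ → ℕ → ℂ := fun n m => if n < m then G n m * R m * u m else 0 with hg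
  -- pointwise identity for g
  have key : ∀ n m : ℕ, g n m - g (n + 1) m = (X n)⁻¹ * f n m := by
    intro n m
    by_cases h1 : m ≤ n
    · simp [hf, hg, Nat.not_lt.mpr h1, Nat.not_lt.mpr (le_trans h1 (Nat.le_succ n))]
    push_neg at h1
    by_cases h2 : m = n + 1
    · subst h2
      simp only [hf, hg, if_neg (lt_irrefl _), if_pos (Nat.lt_succ_self n)]
      rw [hG n (n + 1) le_rfl]
      simp only [Nat.add_sub_cancel, Finset.Icc_self, Finset.sum_singleton]
      field_simp
      ring
    · have h3 : n + 2 ≤ m := by omega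
      simp only [hf, hg, if_pos h1, if_pos (show n + 1 < m by omega)]
      rw [hG n m (by omega), hG (n + 1) m (by omega)]
      have hsplit : Finset.Icc n (m - 1) = insert n (Finset.Icc (n + 1) (m - 1)) := by
        ext x; simp only [Finset.mem_Icc, Finset.mem_insert]; omega
      rw [hsplit, Finset.sum_insert (by simp)]
      field_simp
      ring
  -- pointwise identity for f
  have keyf : ∀ n m : ℕ, f n m - f (n + 1) m
      = (if m = n + 1 then X n * R (n + 1) * u (n + 1) else 0) := by
    intro n m
    by_cases h2 : m = n + 1
    · subst h2
      simp [hf, Nat.lt_succ_self]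
    · by_cases h1 : m ≤ n
      · simp [hf, Nat.not_lt.mpr h1, Nat.not_lt.mpr (le_trans h1 (Nat.le_succ n)), h2]
      · have h3 : n + 2 ≤ m := by omega
        simp [hf, show n < m by omega, show n + 1 < m by omega, h2]
  have hS : ∀ n : ℕ, (∑' m, f n m) = X n * R (n + 1) * u (n + 1) + ∑' m, f (n + 1) m := by
    intro n
    have h1 : (∑' m, f n m) - ∑' m, f (n + 1) m = ∑' m, (f n m - f (n + 1) m) :=
      (Summable.tsum_sub (hsum' n) (hsum' (n + 1))).symm
    have h2 : (∑' m, (f n m - f (n + 1) m)) = X n * R (n + 1) * u (n + 1) := by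
      simp_rw [keyf n]
      exact tsum_ite_eq (n + 1) _
    rw [← h2, ← h1]; ring
  have part1 : ∀ n : ℕ, u (n + 1) - u n = -(X n)⁻¹ * ∑' m, f n m := by
    intro n
    have h1 : u n - u (n + 1) = (X n)⁻¹ * ∑' m, f n m := by
      rw [heq n, heq (n + 1)]
      have h2 : (1 + ∑' m, g n m) - (1 + ∑' m, g (n + 1) m)
          = (∑' m, g n m) - ∑' m, g (n + 1) m := by ring
      rw [h2, ← Summable.tsum_sub (hsum n) (hsum (n + 1))]
      refine (tsum_congr (fun m => key n m)).trans ?_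
      exact tsum_mul_left
    have := congrArg Neg.neg h1
    rw [neg_sub] at this
    rw [this]; ring
  refine ⟨part1, fun n hn => ?_⟩
  obtain ⟨k, rfl⟩ : ∃ k, n = k + 1 := ⟨n - 1, by omega⟩
  have hXs : X (k + 1) = X k * Λ (k + 1) := by
    rw [hX, hX, Finset.prod_Icc_succ_top (by omega)]
  rw [part1 (k + 1), show k + 1 - 1 = k from rfl, part1 k, hS k, hXs]
  have hXk := hXne k
  have hΛk := hΛ (k + 1)
  field_simp
  ring
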